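/- Property of correlations on a non-local facet (Lemma 2): Let P be a no-signalling correlation with Alice inputs Fin X, Bob inputs Fin Y, Alice outputs Fin A, Bob outputs Fin B, lying on a non-local facet, and let LB : Fin Y → Fin B be any function. Then there exists x ∈ Fin X such that for every a ∈ Fin A there exists y ∈ Fin Y with P x y a (LB y) = 0. -/

import Mathlib

open Finset

/-- Property of correlations on a non-local facet (Lemma 2): for every local
deterministic assignment `LB` of Bob, there is an Alice input `x` such that for every
Alice output `a` some Bob input `y` has `P x y a (LB y) = 0`. -/
theorem nonlocal_facet_property
    (X Y A B : ℕ)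
    (P : Fin X → Fin Y → Fin A → Fin B → ℝ)
    (hP0 : ∀ x y a b, 0 ≤ P x y a b)
    (hP1 : ∀ x y, ∑ a : Fin A, ∑ b : Fin B, P x y a b = 1)
    (hNSA : ∀ x a y₁ y₂, ∑ b : Fin B, P x y₁ a b = ∑ b : Fin B, P x y₂ a b)
    (hNSB : ∀ y b x₁ x₂, ∑ a : Fin A, P x₁ y a b = ∑ a : Fin A, P x₂ y a b)
    (hfacet : ∀ (LA : Fin X → Fin A) (LB : Fin Y → Fin B),
      ¬ ∃ (p : ℝ) (Q : Fin X → Fin Y → Fin A → Fin B → ℝ),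
        0 < p ∧ p ≤ 1 ∧
        (∀ x y a b, 0 ≤ Q x y a b) ∧
        (∀ x y, ∑ a : Fin A, ∑ b : Fin B, Q x y a b = 1) ∧
        (∀ x a y₁ y₂, ∑ b : Fin B, Q x y₁ a b = ∑ b : Fin B, Q x y₂ a b) ∧
        (∀ y b x₁ x₂, ∑ a : Fin A, Q x₁ y a b = ∑ a : Fin A, Q x₂ y a b) ∧
        (∀ x y a b, P x y a b =
          p * (if a = LA x ∧ b = LB y then 1 else 0) + (1 - p) * Q x y a b))
    (LB : Fin Y → Fin B) :
    ∃ x : Fin X, ∀ a : Fin A, ∃ y : Fin Y, P x y a (LB y) = 0 := by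
  by_contra hcon
  push_neg at hcon
  -- hcon : ∀ x, ∃ a, ∀ y, P x y a (LB y) ≠ 0
  rcases Nat.eq_zero_or_pos X with hX | hX
  · subst hX
    exact hfacet Fin.elim0 LB
      ⟨1, P, one_pos, le_refl 1, hP0, hP1, hNSA, hNSB, fun x => x.elim0⟩
  rcases Nat.eq_zero_or_pos Y with hY | hY
  · subst hY
    obtain ⟨a, -⟩ := hcon ⟨0, hX⟩
    exact hfacet (fun _ => a) LB
      ⟨1, P, one_pos, le_refl 1, hP0, hP1, hNSA, hNSB, fun x y => y.elim0⟩
  choose LA hLA using hcon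
  have hpos : ∀ x y, 0 < P x y (LA x) (LB y) :=
    fun x y => (hP0 x y (LA x) (LB y)).lt_of_ne (Ne.symm (hLA x y))
  have hne : (Finset.univ : Finset (Fin X × Fin Y)).Nonempty :=
    ⟨⟨⟨0, hX⟩, ⟨0, hY⟩⟩, mem_univ _⟩
  set m := (Finset.univ : Finset (Fin X × Fin Y)).inf' hne
      (fun q => P q.1 q.2 (LA q.1) (LB q.2)) with hm_def
  have hm_pos : 0 < m := by
    rw [hm_def, Finset.lt_inf'_iff]
    exact fun q _ => hpos q.1 q.2
  have hm_le : ∀ x y, m ≤ P x y (LA x) (LB y) :=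
    fun x y => Finset.inf'_le _ (mem_univ (⟨x, y⟩ : Fin X × Fin Y))
  set p := min (1/2 : ℝ) m with hp_def
  have hp0 : 0 < p := lt_min (by norm_num) hm_pos
  have hp1 : p < 1 := lt_of_le_of_lt (min_le_left _ _) (by norm_num)
  have hple : ∀ x y, p ≤ P x y (LA x) (LB y) :=
    fun x y => le_trans (min_le_right _ _) (hm_le x y)
  have h1p : 0 < 1 - p := by linarith
  have h1p' : (1 : ℝ) - p ≠ 0 := ne_of_gt h1p
  set Q := fun x y a b =>
    (P x y a b - p * (if a = LA x ∧ b = LB y then (1:ℝ) else 0)) / (1 - p) with hQ_def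
  have hindb : ∀ (x : Fin X) (y : Fin Y) (a : Fin A),
      ∑ b : Fin B, (if a = LA x ∧ b = LB y then (1:ℝ) else 0)
        = if a = LA x then 1 else 0 := by
    intro x y a
    by_cases h : a = LA x
    · simp [h, Finset.sum_ite_eq']
    · simp [h]
  have hinda : ∀ (x : Fin X) (y : Fin Y) (b : Fin B),
      ∑ a : Fin A, (if a = LA x ∧ b = LB y then (1:ℝ) else 0)
        = if b = LB y then 1 else 0 := by
    intro x y b
    by_cases h : b = LB y
    · simp [h, Finset.sum_ite_eq']
    · simp [h]
  have hind : ∀ (x : Fin X) (y : Fin Y),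
      ∑ a : Fin A, ∑ b : Fin B, (if a = LA x ∧ b = LB y then (1:ℝ) else 0) = 1 := by
    intro x y
    simp only [hindb x y]
    simp [Finset.sum_ite_eq']
  apply hfacet LA LB
  refine ⟨p, Q, hp0, hp1.le, ?_, ?_, ?_, ?_, ?_⟩
  · intro x y a b
    apply div_nonneg _ h1p.le
    split_ifs with h
    · obtain ⟨ha, hb⟩ := h
      subst ha; subst hb
      have := hple x y
      linarith
    · have := hP0 x y a b
      linarith
  · intro x y
    simp only [hQ_def]
    rw [show (∑ a : Fin A, ∑ b : Fin B,
        (P x y a b - p * (if a = LA x ∧ b = LB y then (1:ℝ) else 0)) / (1 - p))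
      = (∑ a : Fin A, ∑ b : Fin B, P x y a b
          - p * ∑ a : Fin A, ∑ b : Fin B,
            (if a = LA x ∧ b = LB y then (1:ℝ) else 0)) / (1 - p) by
      rw [Finset.mul_sum, ← Finset.sum_sub_distrib, Finset.sum_div]
      refine Finset.sum_congr rfl fun a _ => ?_
      rw [Finset.mul_sum, ← Finset.sum_sub_distrib, Finset.sum_div]]
    rw [hP1, hind]
    field_simp
  · intro x a y₁ y₂
    have key : ∀ y : Fin Y, ∑ b : Fin B, Q x y a b
        = (∑ b : Fin B, P x y a b - p * (if a = LA x then 1 else 0)) / (1 - p) := by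
      intro y
      simp only [hQ_def]
      rw [← hindb x y a, Finset.mul_sum, ← Finset.sum_sub_distrib, Finset.sum_div]
    rw [key y₁, key y₂, hNSA x a y₁ y₂]
  · intro y b x₁ x₂
    have key : ∀ x : Fin X, ∑ a : Fin A, Q x y a b
        = (∑ a : Fin A, P x y a b - p * (if b = LB y then 1 else 0)) / (1 - p) := by
      intro x
      simp only [hQ_def]
      rw [← hinda x y b, Finset.mul_sum, ← Finset.sum_sub_distrib, Finset.sum_div]
    rw [key x₁, key x₂, hNSB y b x₁ x₂]
  · intro x y a b
    simp only [hQ_def]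
    field_simp
    ring
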